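/- Let (p̲_i, p̄_i)_{i=1}^n be a good coherent probability interval on E = {a_1,…,a_n}. Define m on 2^E by m({a_i}) = p̲_i, m(E∖{a_i}) = 1 − p̄_i − Σ_{h≠i} p̲_h for each i, m(E) = Δ = S̄ + (n−2)S̲ − (n−1), and m(V) = 0 for every other V ⊆ E. Then m is a mass function on E (all its values are nonnegative and sum to 1, with m(∅) = 0), it has at most 2n+1 focal sets, and it satisfies Bel_m({a_i}) = p̲_i and Pl_m({a_i}) = p̄_i for all i = 1,…,n. -/
import Mathlib


open Finset

/-- A Dempster–Shafer mass function on the finite type `α`: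
nonnegative, at most one, vanishing on `∅`, and summing to one. -/
def IsMass {α : Type*} [Fintype α] [DecidableEq α] (m : Finset α → ℝ) : Prop :=
  m ∅ = 0 ∧ (∀ V : Finset α, 0 ≤ m V ∧ m V ≤ 1) ∧ (∑ V : Finset α, m V) = 1

/-- The belief function associated to a mass function: `Bel m W = ∑_{V ⊆ W} m V`. -/
def Bel {α : Type*} [Fintype α] [DecidableEq α] (m : Finset α → ℝ) (W : Finset α) : ℝ :=
  ∑ V ∈ Finset.univ.filter (fun V : Finset α => V ⊆ W), m V

/-- The plausibility function associated to a mass function: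
`Pl m W = ∑_{V ∩ W ≠ ∅} m V`. -/
def Pl {α : Type*} [Fintype α] [DecidableEq α] (m : Finset α → ℝ) (W : Finset α) : ℝ :=
  ∑ V ∈ Finset.univ.filter (fun V : Finset α => (V ∩ W).Nonempty), m V

/-- A coherent probability interval `(lo i, hi i)_{i}` on `Fin n`:
componentwise bounds `0 ≤ lo ≤ hi ≤ 1`, together with [Coh1], [Coh2], [Coh3]. -/
def IsCoherent {n : ℕ} (lo hi : Fin n → ℝ) : Prop :=
  (∀ i, 0 ≤ lo i ∧ lo i ≤ hi i ∧ hi i ≤ 1) ∧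
  (∑ i, lo i) ≤ 1 ∧ 1 ≤ (∑ i, hi i) ∧
  (∀ i, 1 - ∑ h ∈ Finset.univ.erase i, hi h ≤ lo i) ∧
  (∀ i, hi i ≤ 1 - ∑ h ∈ Finset.univ.erase i, lo h)

/-- `Δ = S̄ + (n-2)S̲ - (n-1)` for a probability interval. -/
def intervalDelta {n : ℕ} (lo hi : Fin n → ℝ) : ℝ :=
  (∑ i, hi i) + ((n : ℝ) - 2) * (∑ i, lo i) - ((n : ℝ) - 1)

/-- A *good* coherent probability interval: coherent and `Δ ≥ 0`. -/
def IsGood {n : ℕ} (lo hi : Fin n → ℝ) : Prop :=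
  IsCoherent lo hi ∧ 0 ≤ intervalDelta lo hi

/-- The standard good mass (SGM) associated to a (good coherent) probability interval:
mass `lo i` on each singleton `{a_i}`, mass `1 - hi i - ∑_{h ≠ i} lo h` on each
complement `univ ∖ {a_i}`, mass `Δ` on `univ`, and `0` on every other set. -/
def SGM {n : ℕ} (lo hi : Fin n → ℝ) (V : Finset (Fin n)) : ℝ :=
  (∑ i ∈ Finset.univ.filter (fun i : Fin n => V = {i}), lo i)
  + (∑ i ∈ Finset.univ.filter (fun i : Fin n => V = Finset.univ \ {i}),
      (1 - hi i - ∑ h ∈ Finset.univ.erase i, lo h))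
  + (if V = Finset.univ then intervalDelta lo hi else 0)

/-- auxiliary: mass of complements -/
noncomputable def cmass {n : ℕ} (lo hi : Fin n → ℝ) (j : Fin n) : ℝ :=
  1 - hi j - ∑ h ∈ Finset.univ.erase j, lo h

lemma SGM_eq {n : ℕ} (lo hi : Fin n → ℝ) (V : Finset (Fin n)) :
    SGM lo hi V = (∑ i, if V = {i} then lo i else 0)
      + (∑ i, if V = Finset.univ \ {i} then cmass lo hi i else 0)
      + (if V = Finset.univ then intervalDelta lo hi else 0) := by
  unfold SGM cmass
  rw [Finset.sum_filter, Finset.sum_filter]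

lemma sum_swap_ite {n : ℕ} (P : Finset (Fin n) → Prop) [DecidablePred P]
    (g : Fin n → Finset (Fin n)) (f : Fin n → ℝ) :
    ∑ V ∈ Finset.univ.filter P, ∑ i, (if V = g i then f i else 0)
      = ∑ i, if P (g i) then f i else 0 := by
  rw [Finset.sum_comm]
  refine Finset.sum_congr rfl fun i _ => ?_
  rw [Finset.sum_ite_eq' (Finset.univ.filter P) (g i) (fun _ => f i)]
  simp

lemma sum_SGM_filter {n : ℕ} (lo hi : Fin n → ℝ) (P : Finset (Fin n) → Prop) [DecidablePred P] :
    ∑ V ∈ Finset.univ.filter P, SGM lo hi V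
      = (∑ i, if P {i} then lo i else 0)
        + (∑ i, if P (Finset.univ \ {i}) then cmass lo hi i else 0)
        + (if P Finset.univ then intervalDelta lo hi else 0) := by
  simp only [SGM_eq, Finset.sum_add_distrib]
  rw [sum_swap_ite P (fun i => {i}) lo,
    sum_swap_ite P (fun i => Finset.univ \ {i}) (cmass lo hi),
    Finset.sum_ite_eq' (Finset.univ.filter P) Finset.univ (fun _ => intervalDelta lo hi)]
  simp

lemma sum_cmass {n : ℕ} (lo hi : Fin n → ℝ) :
    ∑ i, cmass lo hi i
      = (n : ℝ) - (∑ i, hi i) - ((n : ℝ) - 1) * (∑ i, lo i) := by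
  unfold cmass
  simp only [Finset.sum_erase_eq_sub (Finset.mem_univ _), Finset.sum_sub_distrib,
    Finset.sum_const, Finset.card_univ, Fintype.card_fin, nsmul_eq_mul, mul_one]
  ring

lemma good_npos {n : ℕ} {lo hi : Fin n → ℝ} (h : IsGood lo hi) : 0 < n := by
  rcases Nat.eq_zero_or_pos n with h0 | h0
  · exfalso
    have h1 := h.1.2.2.1
    subst h0
    simp at h1
    linarith
  · exact h0

lemma univ_singleton {n : ℕ} {lo hi : Fin n → ℝ} (h : IsGood lo hi) {i : Fin n}
    (hu : (Finset.univ : Finset (Fin n)) = {i}) : lo i = 1 ∧ hi i = 1 := by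
  have h2 := h.1.2.2.2.1 i
  have hb := h.1.1 i
  rw [hu, Finset.erase_singleton, Finset.sum_empty] at h2
  constructor <;> linarith

lemma cmass_vanish {n : ℕ} {lo hi : Fin n → ℝ} (h : IsGood lo hi) {i j : Fin n}
    (hsub : Finset.univ \ {j} ⊆ {i}) : cmass lo hi j = 0 := by
  have herase : (Finset.univ : Finset (Fin n)).erase j = Finset.univ \ {j} := by
    ext x; simp [Finset.mem_erase, and_comm]
  rcases Finset.subset_singleton_iff.mp hsub with hc | hc
  · -- univ \ {j} = ∅, so univ = {j}
    have huniv : (Finset.univ : Finset (Fin n)) = {j} := by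
      apply Finset.Subset.antisymm
      · exact Finset.sdiff_eq_empty_iff_subset.mp hc
      · intro x _; exact Finset.mem_univ x
    obtain ⟨_, hj1⟩ := univ_singleton h huniv
    unfold cmass
    rw [herase, hc, Finset.sum_empty, hj1]
    ring
  · -- univ \ {j} = {i}
    have hji : j ≠ i := by
      intro he
      have : i ∈ Finset.univ \ {j} := by rw [hc]; exact Finset.mem_singleton_self i
      simp [he] at this
    have hall : ∀ x : Fin n, x = i ∨ x = j := by
      intro x
      by_cases hx : x = j
      · right; exact hx
      · left
        have : x ∈ Finset.univ \ {j} := by simp [hx]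
        rw [hc] at this; exact Finset.mem_singleton.mp this
    have herasei : (Finset.univ : Finset (Fin n)).erase i = {j} := by
      ext x
      simp only [Finset.mem_erase, Finset.mem_univ, and_true, Finset.mem_singleton]
      constructor
      · intro hx; rcases hall x with h1 | h1
        · exact absurd h1 hx
        · exact h1
      · intro hx; rw [hx]; exact hji
    have h2 := h.1.2.2.2.1 i
    rw [herasei, Finset.sum_singleton] at h2
    have h3 := h.1.2.2.2.2 j
    unfold cmass
    rw [herase, hc, Finset.sum_singleton]
    have h3' : hi j ≤ 1 - ∑ h ∈ Finset.univ.erase j, lo h := h3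
    rw [herase, hc, Finset.sum_singleton] at h3'
    linarith

lemma delta_vanish {n : ℕ} {lo hi : Fin n → ℝ} (h : IsGood lo hi) {i : Fin n}
    (hsub : (Finset.univ : Finset (Fin n)) ⊆ {i}) : intervalDelta lo hi = 0 := by
  have huniv : (Finset.univ : Finset (Fin n)) = {i} :=
    Finset.Subset.antisymm hsub (fun x _ => Finset.mem_univ x)
  obtain ⟨hl1, hh1⟩ := univ_singleton h huniv
  have hn1 : n = 1 := by
    have := Finset.card_univ (α := Fin n)
    rw [huniv, Finset.card_singleton] at this
    simpa using this.symm
  unfold intervalDelta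
  rw [huniv, Finset.sum_singleton, Finset.sum_singleton, hl1, hh1, hn1]
  norm_num

lemma cmass_nonneg {n : ℕ} {lo hi : Fin n → ℝ} (h : IsGood lo hi) (j : Fin n) :
    0 ≤ cmass lo hi j := by
  have := h.1.2.2.2.2 j
  unfold cmass
  linarith

/-- For a good coherent probability interval `(lo, hi)` on `Fin n`,
the standard good mass `SGM lo hi` (mass `lo i` on `{aᵢ}`,
`1 - hi i - ∑_{h ≠ i} lo h` on `univ ∖ {aᵢ}`, `Δ` on `univ`, `0` elsewhere) is a
mass function, has at most `2n + 1` focal sets, and its belief and plausibility on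
singletons reproduce the interval: `Bel({aᵢ}) = lo i` and `Pl({aᵢ}) = hi i`. -/
theorem standard_good_mass_is_mass (n : ℕ) (lo hi : Fin n → ℝ)
    (h : IsGood lo hi) :
    IsMass (SGM lo hi) ∧
    (Finset.univ.filter fun V : Finset (Fin n) => 0 < SGM lo hi V).card ≤ 2 * n + 1 ∧
    (∀ i, Bel (SGM lo hi) {i} = lo i) ∧
    (∀ i, Pl (SGM lo hi) {i} = hi i) := by
  have hnn : ∀ V, 0 ≤ SGM lo hi V := by
    intro V
    rw [SGM_eq]
    have h1 : 0 ≤ ∑ i, (if V = {i} then lo i else 0) :=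
      Finset.sum_nonneg fun i _ => by split_ifs; exacts [(h.1.1 i).1, le_refl 0]
    have h2 : 0 ≤ ∑ i, (if V = Finset.univ \ {i} then cmass lo hi i else 0) :=
      Finset.sum_nonneg fun i _ => by split_ifs; exacts [cmass_nonneg h i, le_refl 0]
    have h3 : 0 ≤ (if V = Finset.univ then intervalDelta lo hi else 0) := by
      split_ifs; exacts [h.2, le_refl 0]
    linarith
  have htot : (∑ V : Finset (Fin n), SGM lo hi V) = 1 := by
    have ht := sum_SGM_filter lo hi (fun _ => True)
    simp only [Finset.filter_true, if_true] at ht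
    rw [ht, sum_cmass]
    unfold intervalDelta
    ring
  have hzero : SGM lo hi ∅ = 0 := by
    rw [SGM_eq]
    have h1 : (∑ i, if (∅ : Finset (Fin n)) = {i} then lo i else 0) = 0 :=
      Finset.sum_eq_zero fun i _ => by
        rw [if_neg]; exact fun he => (Finset.singleton_ne_empty i) he.symm
    have h2 : (∑ i, if (∅ : Finset (Fin n)) = Finset.univ \ {i} then cmass lo hi i else 0) = 0 :=
      Finset.sum_eq_zero fun i _ => by
        split_ifs with he
        · exact cmass_vanish (i := i) (j := i) h (by rw [← he]; exact Finset.empty_subset _)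
        · rfl
    have h3 : (if (∅ : Finset (Fin n)) = Finset.univ then intervalDelta lo hi else 0) = 0 := by
      rw [if_neg]
      intro he
      have hpos := good_npos h
      have hc : (Finset.univ : Finset (Fin n)).card = 0 := by rw [← he]; rfl
      rw [Finset.card_univ, Fintype.card_fin] at hc
      omega
    rw [h1, h2, h3]; ring
  refine ⟨⟨hzero, fun V => ⟨hnn V, ?_⟩, htot⟩, ?_, ?_, ?_⟩
  · -- SGM V ≤ 1
    calc SGM lo hi V ≤ ∑ W : Finset (Fin n), SGM lo hi W :=
          Finset.single_le_sum (fun W _ => hnn W) (Finset.mem_univ V)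
      _ = 1 := htot
  · -- card bound
    have hsub : (Finset.univ.filter fun V : Finset (Fin n) => 0 < SGM lo hi V) ⊆
        ((Finset.univ.image fun i : Fin n => ({i} : Finset (Fin n))) ∪
         (Finset.univ.image fun i : Fin n => Finset.univ \ {i})) ∪ {Finset.univ} := by
      intro V hV
      rw [Finset.mem_filter] at hV
      by_contra hmem
      simp only [Finset.mem_union, Finset.mem_image, Finset.mem_singleton, Finset.mem_univ,
        true_and, not_or, not_exists] at hmem
      obtain ⟨⟨hm1, hm2⟩, hm3⟩ := hmem
      have hzz : SGM lo hi V = 0 := by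
        rw [SGM_eq]
        have e1 : (∑ i, if V = {i} then lo i else 0) = 0 :=
          Finset.sum_eq_zero fun i _ => by rw [if_neg]; exact fun he => hm1 i he.symm
        have e2 : (∑ i, if V = Finset.univ \ {i} then cmass lo hi i else 0) = 0 :=
          Finset.sum_eq_zero fun i _ => by rw [if_neg]; exact fun he => hm2 i he.symm
        rw [e1, e2, if_neg hm3]; ring
      linarith [hV.2]
    refine le_trans (Finset.card_le_card hsub) (le_trans (Finset.card_union_le _ _) ?_)
    have hu := Finset.card_union_le (Finset.univ.image fun i : Fin n => ({i} : Finset (Fin n)))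
      (Finset.univ.image fun i : Fin n => Finset.univ \ {i})
    have h1 := Finset.card_image_le (s := (Finset.univ : Finset (Fin n)))
      (f := fun i => ({i} : Finset (Fin n)))
    have h2 := Finset.card_image_le (s := (Finset.univ : Finset (Fin n)))
      (f := fun i => Finset.univ \ {i})
    rw [Finset.card_univ, Fintype.card_fin] at h1 h2
    simp only [Finset.card_singleton]
    omega
  · -- Bel
    intro i
    unfold Bel
    rw [sum_SGM_filter]
    have e1 : (∑ j, if ({j} : Finset (Fin n)) ⊆ {i} then lo j else 0) = lo i := by
      simp only [Finset.singleton_subset_iff, Finset.mem_singleton]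
      rw [Finset.sum_ite_eq' Finset.univ i lo]
      simp
    have e2 : (∑ j, if Finset.univ \ {j} ⊆ ({i} : Finset (Fin n)) then cmass lo hi j else 0) = 0 :=
      Finset.sum_eq_zero fun j _ => by
        split_ifs with he
        · exact cmass_vanish h he
        · rfl
    have e3 : (if (Finset.univ : Finset (Fin n)) ⊆ {i} then intervalDelta lo hi else 0) = 0 := by
      split_ifs with he
      · exact delta_vanish h he
      · rfl
    rw [e1, e2, e3]; ring
  · -- Pl
    intro i
    unfold Pl
    rw [sum_SGM_filter]
    have e1 : (∑ j, if (({j} : Finset (Fin n)) ∩ {i}).Nonempty then lo j else 0) = lo i := by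
      have hc : ∀ j : Fin n, (({j} : Finset (Fin n)) ∩ {i}).Nonempty ↔ j = i := by
        intro j
        constructor
        · rintro ⟨x, hx⟩
          simp only [Finset.mem_inter, Finset.mem_singleton] at hx
          rw [← hx.1, hx.2]
        · rintro rfl; exact ⟨j, by simp⟩
      rw [Finset.sum_congr rfl fun j _ => if_congr (hc j) rfl rfl,
        Finset.sum_ite_eq' Finset.univ i lo]
      simp
    have e2 : (∑ j, if ((Finset.univ \ {j}) ∩ ({i} : Finset (Fin n))).Nonempty
        then cmass lo hi j else 0)
        = (∑ j, cmass lo hi j) - cmass lo hi i := by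
      have hc : ∀ j : Fin n, ((Finset.univ \ {j}) ∩ ({i} : Finset (Fin n))).Nonempty ↔ j ≠ i := by
        intro j
        constructor
        · rintro ⟨x, hx⟩
          simp only [Finset.mem_inter, Finset.mem_sdiff, Finset.mem_univ, true_and,
            Finset.mem_singleton] at hx
          rw [← hx.2]; exact fun he => hx.1 he.symm
        · intro hji
          exact ⟨i, by simp [Ne.symm hji]⟩
      rw [Finset.sum_congr rfl fun j _ => if_congr (hc j) rfl rfl, ← Finset.sum_filter]
      rw [Finset.filter_ne' Finset.univ i, Finset.sum_erase_eq_sub (Finset.mem_univ i)]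
    have e3 : (if ((Finset.univ : Finset (Fin n)) ∩ {i}).Nonempty then intervalDelta lo hi else 0)
        = intervalDelta lo hi := by
      rw [if_pos ⟨i, by simp⟩]
    rw [e1, e2, e3, sum_cmass]
    have hci : cmass lo hi i = 1 - hi i - ((∑ h, lo h) - lo i) := by
      unfold cmass
      rw [Finset.sum_erase_eq_sub (Finset.mem_univ i)]
    rw [hci]
    unfold intervalDelta
    ring
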